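/- Let n, n_t be positive integers, let g_1, …, g_n ≥ 0 be nonnegative reals, and let A ≥ 0. Then the objective function of the sum-rate maximization problem, R(W_s, P_s, W_m, P_m) = W_s·Σ_{i=1}^{n} log(1 + P_s·g_i/(W_s·n_t)) + W_m·log(1 + P_m·A/W_m), is concave on the convex set {(W_s, P_s, W_m, P_m) ∈ ℝ⁴ : W_s > 0, W_m > 0, P_s ≥ 0, P_m ≥ 0}. -/

import Mathlib

open Real Set

private lemma key_perspective (c d : ℝ) (hc : 0 ≤ c) (hd : 0 < d) :
    ConcaveOn ℝ {p : ℝ × ℝ | 0 < p.1 ∧ 0 ≤ p.2}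
      (fun p => p.1 * Real.log (1 + p.2 * c / (p.1 * d))) := by
  have hset : {p : ℝ × ℝ | 0 < p.1 ∧ 0 ≤ p.2} = Ioi (0:ℝ) ×ˢ Ici (0:ℝ) := rfl
  constructor
  · rw [hset]; exact (convex_Ioi 0).prod (convex_Ici 0)
  · rintro ⟨x₁, p₁⟩ ⟨hx₁, hp₁⟩ ⟨x₂, p₂⟩ ⟨hx₂, hp₂⟩ a b ha hb hab
    simp only [Prod.smul_mk, Prod.mk_add_mk, smul_eq_mul, Prod.fst, Prod.snd]
    rcases ha.eq_or_lt with rfl | ha'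
    · rw [zero_add] at hab; subst hab; simp
    rcases hb.eq_or_lt with rfl | hb'
    · rw [add_zero] at hab; subst hab; simp
    set X := a * x₁ + b * x₂ with hX
    have hXpos : 0 < X := by positivity
    set r₁ := 1 + p₁ * c / (x₁ * d) with hr₁
    set r₂ := 1 + p₂ * c / (x₂ * d) with hr₂
    have hr₁pos : 0 < r₁ := by positivity
    have hr₂pos : 0 < r₂ := by positivity
    have hlog := strictConcaveOn_log_Ioi.concaveOn.2 (mem_Ioi.2 hr₁pos) (mem_Ioi.2 hr₂pos)
      (by positivity : (0:ℝ) ≤ a * x₁ / X) (by positivity : (0:ℝ) ≤ b * x₂ / X)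
      (by field_simp; exact hX.symm)
    simp only [smul_eq_mul] at hlog
    have harg : a * x₁ / X * r₁ + b * x₂ / X * r₂
        = 1 + (a * p₁ + b * p₂) * c / (X * d) := by
      rw [hr₁, hr₂]; field_simp; ring
    rw [harg] at hlog
    have := mul_le_mul_of_nonneg_left hlog hXpos.le
    calc a * (x₁ * Real.log r₁) + b * (x₂ * Real.log r₂)
        = X * (a * x₁ / X * Real.log r₁ + b * x₂ / X * Real.log r₂) := by
          field_simp
      _ ≤ X * Real.log (1 + (a * p₁ + b * p₂) * c / (X * d)) := this

private lemma concaveOn_finset_sum {ι E : Type*} [AddCommGroup E] [Module ℝ E] {s : Set E}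
    (hs : Convex ℝ s) (t : Finset ι) (f : ι → E → ℝ)
    (h : ∀ i ∈ t, ConcaveOn ℝ s (f i)) :
    ConcaveOn ℝ s (fun x => ∑ i ∈ t, f i x) := by
  induction t using Finset.cons_induction with
  | empty => simpa using concaveOn_const (0:ℝ) hs
  | cons i t hi ih =>
      simp only [Finset.sum_cons]
      exact (h i (Finset.mem_cons_self _ _)).add (ih fun j hj => h j (Finset.mem_cons_of_mem hj))

theorem stmt_7 (n nt : ℕ) (hn : 0 < n) (hnt : 0 < nt)
    (g : Fin n → ℝ) (hg : ∀ i, 0 ≤ g i) (A : ℝ) (hA : 0 ≤ A) :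
    ConcaveOn ℝ
      {p : (ℝ × ℝ) × ℝ × ℝ | 0 < p.1.1 ∧ 0 ≤ p.1.2 ∧ 0 < p.2.1 ∧ 0 ≤ p.2.2}
      (fun p : (ℝ × ℝ) × ℝ × ℝ =>
        p.1.1 * ∑ i, Real.log (1 + p.1.2 * g i / (p.1.1 * (nt : ℝ))) +
          p.2.1 * Real.log (1 + p.2.2 * A / p.2.1)) := by
  set S : Set ((ℝ × ℝ) × ℝ × ℝ) :=
    {p | 0 < p.1.1 ∧ 0 ≤ p.1.2 ∧ 0 < p.2.1 ∧ 0 ≤ p.2.2} with hS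
  have hSprod : S = (Ioi (0:ℝ) ×ˢ Ici (0:ℝ)) ×ˢ (Ioi (0:ℝ) ×ˢ Ici (0:ℝ)) := by
    ext p; simp [hS, Set.mem_prod, and_assoc]
  have hconv : Convex ℝ S := by
    rw [hSprod]
    exact (((convex_Ioi 0).prod (convex_Ici 0)).prod ((convex_Ioi 0).prod (convex_Ici 0)))
  have hntpos : (0:ℝ) < (nt:ℝ) := by exact_mod_cast hnt
  have h1 : ∀ i : Fin n, ConcaveOn ℝ S
      (fun p : (ℝ × ℝ) × ℝ × ℝ => p.1.1 * Real.log (1 + p.1.2 * g i / (p.1.1 * (nt:ℝ)))) := by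
    intro i
    have := ((key_perspective (g i) (nt:ℝ) (hg i) hntpos).comp_linearMap
      (LinearMap.fst ℝ (ℝ × ℝ) (ℝ × ℝ)))
    exact this.subset (fun p hp => ⟨hp.1, hp.2.1⟩) hconv
  have h2 : ConcaveOn ℝ S
      (fun p : (ℝ × ℝ) × ℝ × ℝ => p.2.1 * Real.log (1 + p.2.2 * A / p.2.1)) := by
    have := ((key_perspective A 1 hA one_pos).comp_linearMap
      (LinearMap.snd ℝ (ℝ × ℝ) (ℝ × ℝ)))
    have h' := this.subset (fun p hp => ⟨hp.2.2.1, hp.2.2.2⟩) hconv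
    have heq : (fun p : (ℝ × ℝ) × ℝ × ℝ => p.2.1 * Real.log (1 + p.2.2 * A / p.2.1))
        = (fun p : (ℝ × ℝ) × ℝ × ℝ => p.2.1 * Real.log (1 + p.2.2 * A / (p.2.1 * 1))) := by
      funext p; rw [mul_one]
    rw [heq]
    exact h'
  simp only [Finset.mul_sum]
  exact (concaveOn_finset_sum hconv Finset.univ _ (fun i _ => h1 i)).add h2
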